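/- For every Schwartz function f on ℝ² and every (x₁, k) ∈ ℝ², the partial Fourier transform in the second variable, ℱ[f](x₁,k) := (2π)^{−1/2} ∫_ℝ f(x₁,x₂) e^{i k x₂} dx₂, conjugates the Landau operator to a shifted harmonic oscillator: ℱ[L_A f](x₁, k) = −∂²_{x₁} ℱ[f](x₁,k) + (b x₁ − k)² ℱ[f](x₁,k). -/

import Mathlib

open MeasureTheory Real

/-- The Landau operator with gauge `A = b(0, x₁, 0)`:
`(L_A f)(x₁,x₂) = −∂²_{x₁} f − ∂²_{x₂} f − 2 i b x₁ ∂_{x₂} f + b² x₁² f`. -/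
noncomputable def landauOp (b : ℝ) (f : ℝ × ℝ → ℂ) : ℝ × ℝ → ℂ := fun x =>
  -(deriv (deriv (fun t => f (t, x.2))) x.1)
    - deriv (deriv (fun t => f (x.1, t))) x.2
    - 2 * Complex.I * b * x.1 * deriv (fun t => f (x.1, t)) x.2
    + b ^ 2 * x.1 ^ 2 * f x

/-- Partial Fourier transform in the second variable:
`ℱ[f](x₁,k) = (2π)^{-1/2} ∫ f(x₁,x₂) e^{i k x₂} dx₂`. -/
noncomputable def partialFourier (f : ℝ × ℝ → ℂ) : ℝ × ℝ → ℂ := fun p =>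
  (Real.sqrt (2 * π))⁻¹ * ∫ y : ℝ, f (p.1, y) * Complex.exp (Complex.I * p.2 * y)


open SchwartzMap FourierTransform

noncomputable def Ek (k : ℝ) : ℝ → ℂ := fun y => Complex.exp (Complex.I * k * y)

lemma Ek_norm (k y : ℝ) : ‖Ek k y‖ = 1 := by
  have : Complex.I * k * y = ((k * y : ℝ) : ℂ) * Complex.I := by push_cast; ring
  rw [Ek, this, Complex.norm_exp_ofReal_mul_I]

lemma Ek_cont (k : ℝ) : Continuous (Ek k) := by
  unfold Ek; fun_prop

lemma decay2 (g : SchwartzMap (ℝ × ℝ) ℂ) :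
    ∃ C : ℝ, 0 < C ∧ ∀ x : ℝ × ℝ, ‖g x‖ ≤ C * (1 + ‖x.2‖) ^ (-(2:ℝ)) := by
  obtain ⟨C₀, hC₀pos, hC₀⟩ := g.decay 0 0
  obtain ⟨C₂, hC₂pos, hC₂⟩ := g.decay 2 0
  refine ⟨2 * C₀ + 2 * C₂, by positivity, fun x => ?_⟩
  have h0 := hC₀ x
  have h2 := hC₂ x
  rw [norm_iteratedFDeriv_zero] at h0 h2
  simp only [pow_zero, one_mul] at h0
  have ht : ‖x.2‖ ≤ ‖x‖ := norm_snd_le x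
  have hrp : (1 + ‖x.2‖) ^ (-(2:ℝ)) = ((1 + ‖x.2‖) ^ (2:ℕ))⁻¹ := by
    rw [Real.rpow_neg (by positivity), ← Real.rpow_natCast (1 + ‖x.2‖) 2]
    norm_num
  rw [hrp, ← div_eq_mul_inv, le_div_iff₀ (by positivity)]
  have hn : (0:ℝ) ≤ ‖g x‖ := norm_nonneg _
  have hn2 : (0:ℝ) ≤ ‖x.2‖ := norm_nonneg _
  nlinarith [sq_nonneg (‖x.2‖ - 1), sq_nonneg ‖x.2‖,
    mul_le_mul_of_nonneg_left (pow_le_pow_left₀ hn2 ht 2) hn]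

lemma bound_int (C : ℝ) : Integrable (fun y : ℝ => C * (1 + ‖y‖) ^ (-(2:ℝ))) :=
  (integrable_one_add_norm (by simp : ((Module.finrank ℝ ℝ) : ℝ) < 2)).const_mul C

lemma slice_cont (g : SchwartzMap (ℝ × ℝ) ℂ) (x₁ : ℝ) :
    Continuous (fun y => g (x₁, y)) :=
  g.continuous.comp (continuous_const.prodMk continuous_id)

lemma slice_int (g : SchwartzMap (ℝ × ℝ) ℂ) (x₁ : ℝ) :
    Integrable (fun y => g (x₁, y)) := by
  obtain ⟨C, hC0, hC⟩ := decay2 g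
  exact (bound_int C).mono' (slice_cont g x₁).aestronglyMeasurable
    (Filter.Eventually.of_forall fun y => hC (x₁, y))

lemma sliceE_int (g : SchwartzMap (ℝ × ℝ) ℂ) (x₁ k : ℝ) :
    Integrable (fun y => g (x₁, y) * Ek k y) := by
  refine (slice_int g x₁).norm.mono' (((slice_cont g x₁).mul (Ek_cont k)).aestronglyMeasurable)
    (Filter.Eventually.of_forall fun y => ?_)
  rw [norm_mul, Ek_norm, mul_one]

lemma hasDerivAt_slice2 (g : SchwartzMap (ℝ × ℝ) ℂ) (x₁ y : ℝ) :
    HasDerivAt (fun t => g (x₁, t)) (LineDeriv.lineDerivOpCLM ℝ 𝓢(ℝ × ℝ, ℂ) ((0:ℝ), (1:ℝ)) g (x₁, y)) y := by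
  have h := (g.differentiableAt (x := (x₁, y))).hasFDerivAt
  have hc : HasDerivAt (fun t : ℝ => ((x₁, t) : ℝ × ℝ)) ((0:ℝ), (1:ℝ)) y :=
    (hasDerivAt_const y x₁).prodMk (hasDerivAt_id y)
  simpa [LineDeriv.lineDerivOpCLM_apply, lineDerivOp_apply_eq_fderiv, Function.comp_def] using h.comp_hasDerivAt y hc

lemma hasDerivAt_slice1 (g : SchwartzMap (ℝ × ℝ) ℂ) (t y : ℝ) :
    HasDerivAt (fun s => g (s, y)) (LineDeriv.lineDerivOpCLM ℝ 𝓢(ℝ × ℝ, ℂ) ((1:ℝ), (0:ℝ)) g (t, y)) t := by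
  have h := (g.differentiableAt (x := (t, y))).hasFDerivAt
  have hc : HasDerivAt (fun s : ℝ => ((s, y) : ℝ × ℝ)) ((1:ℝ), (0:ℝ)) t :=
    (hasDerivAt_id t).prodMk (hasDerivAt_const t y)
  simpa [LineDeriv.lineDerivOpCLM_apply, lineDerivOp_apply_eq_fderiv, Function.comp_def] using h.comp_hasDerivAt t hc

lemma fourier_eq (k : ℝ) (h : ℝ → ℂ) :
    𝓕 h (-k / (2 * π)) = ∫ y, h y * Ek k y := by
  rw [Real.fourier_real_eq_integral_exp_smul]
  congr 1; ext y
  rw [smul_eq_mul, mul_comm]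
  congr 1
  have : -2 * π * y * (-k / (2 * π)) = k * y := by
    field_simp
  rw [Ek, this]
  push_cast
  ring_nf

lemma ibp (g : SchwartzMap (ℝ × ℝ) ℂ) (x₁ k : ℝ) :
    ∫ y, LineDeriv.lineDerivOpCLM ℝ 𝓢(ℝ × ℝ, ℂ) ((0:ℝ), (1:ℝ)) g (x₁, y) * Ek k y
      = (-Complex.I * k) * ∫ y, g (x₁, y) * Ek k y := by
  have hd : deriv (fun y => g (x₁, y)) = fun y => LineDeriv.lineDerivOpCLM ℝ 𝓢(ℝ × ℝ, ℂ) ((0:ℝ), (1:ℝ)) g (x₁, y) :=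
    funext fun y => (hasDerivAt_slice2 g x₁ y).deriv
  have h := Real.fourier_deriv (slice_int g x₁)
    (fun y => (hasDerivAt_slice2 g x₁ y).differentiableAt)
    (hd ▸ slice_int (LineDeriv.lineDerivOpCLM ℝ 𝓢(ℝ × ℝ, ℂ) ((0:ℝ), (1:ℝ)) g) x₁)
  have h2 := congrFun h (-k / (2 * π))
  rw [hd, fourier_eq, fourier_eq] at h2
  rw [h2, smul_eq_mul]
  have hπ : (π : ℂ) ≠ 0 := by exact_mod_cast Real.pi_ne_zero
  have : (((-k / (2 * π) : ℝ)) : ℂ) = -k / (2 * π) := by push_cast; ring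
  rw [this]
  field_simp

lemma hasDerivAt_T (g : SchwartzMap (ℝ × ℝ) ℂ) (k x₁ : ℝ) :
    HasDerivAt (fun t => ∫ y, g (t, y) * Ek k y)
      (∫ y, LineDeriv.lineDerivOpCLM ℝ 𝓢(ℝ × ℝ, ℂ) ((1:ℝ), (0:ℝ)) g (x₁, y) * Ek k y) x₁ := by
  obtain ⟨C, hC0, hC⟩ := decay2 (LineDeriv.lineDerivOpCLM ℝ 𝓢(ℝ × ℝ, ℂ) ((1:ℝ), (0:ℝ)) g)
  refine (hasDerivAt_integral_of_dominated_loc_of_deriv_le (Metric.ball_mem_nhds x₁ one_pos)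
    (Filter.Eventually.of_forall fun x =>
      ((slice_cont g x).mul (Ek_cont k)).aestronglyMeasurable)
    (sliceE_int g x₁ k)
    ((((slice_cont (LineDeriv.lineDerivOpCLM ℝ 𝓢(ℝ × ℝ, ℂ) ((1:ℝ), (0:ℝ)) g) x₁)).mul (Ek_cont k)).aestronglyMeasurable)
    (Filter.Eventually.of_forall fun y => fun x _ => ?_)
    (bound_int C)
    (Filter.Eventually.of_forall fun y => fun x _ =>
      (hasDerivAt_slice1 g x y).mul_const (Ek k y))).2
  rw [norm_mul, Ek_norm, mul_one]
  exact hC (x, y)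

/-- For every Schwartz function `f` on `ℝ²`, the partial Fourier transform in the second
variable conjugates the Landau operator to a shifted harmonic oscillator:
`ℱ[L_A f](x₁,k) = −∂²_{x₁} ℱ[f](x₁,k) + (b x₁ − k)² ℱ[f](x₁,k)`. -/
theorem partialFourier_landauOp (b : ℝ) (hb : b ≠ 0) (f : SchwartzMap (ℝ × ℝ) ℂ)
    (x₁ k : ℝ) :
    partialFourier (landauOp b f) (x₁, k) =
      -(deriv (deriv (fun t => partialFourier (⇑f) (t, k))) x₁)
        + ((b : ℂ) * x₁ - k) ^ 2 * partialFourier (⇑f) (x₁, k) := by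

  set P₁ : SchwartzMap (ℝ × ℝ) ℂ →L[ℝ] SchwartzMap (ℝ × ℝ) ℂ :=
    LineDeriv.lineDerivOpCLM ℝ 𝓢(ℝ × ℝ, ℂ) ((1:ℝ), (0:ℝ)) with hP₁
  set P₂ : SchwartzMap (ℝ × ℝ) ℂ →L[ℝ] SchwartzMap (ℝ × ℝ) ℂ :=
    LineDeriv.lineDerivOpCLM ℝ 𝓢(ℝ × ℝ, ℂ) ((0:ℝ), (1:ℝ)) with hP₂
  have hL : ∀ y : ℝ, landauOp b (⇑f) (x₁, y) =
      -(P₁ (P₁ f) (x₁, y)) - P₂ (P₂ f) (x₁, y)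
        - 2 * Complex.I * b * x₁ * P₂ f (x₁, y)
        + b ^ 2 * x₁ ^ 2 * f (x₁, y) := by
    intro y
    have h1 : deriv (fun t => f (t, y)) = fun t => P₁ f (t, y) :=
      funext fun t => (hasDerivAt_slice1 f t y).deriv
    have h2 : deriv (fun t => f (x₁, t)) = fun t => P₂ f (x₁, t) :=
      funext fun t => (hasDerivAt_slice2 f x₁ t).deriv
    simp only [landauOp, h1, h2, (hasDerivAt_slice1 (P₁ f) x₁ y).deriv,
      (hasDerivAt_slice2 (P₂ f) x₁ y).deriv]
    rfl
  -- abbreviations for the four integrals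
  set T0 : ℂ := ∫ y, f (x₁, y) * Ek k y with hT0
  set T2 : ℂ := ∫ y, P₂ f (x₁, y) * Ek k y with hT2
  set T22 : ℂ := ∫ y, P₂ (P₂ f) (x₁, y) * Ek k y with hT22
  set T11 : ℂ := ∫ y, P₁ (P₁ f) (x₁, y) * Ek k y with hT11
  have hA := sliceE_int (P₁ (P₁ f)) x₁ k
  have hB := sliceE_int (P₂ (P₂ f)) x₁ k
  have hD := sliceE_int (P₂ f) x₁ k
  have hG := sliceE_int f x₁ k
  have hsplit : (∫ y, landauOp b (⇑f) (x₁, y) * Ek k y)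
      = -T11 - T22 - 2 * Complex.I * b * x₁ * T2 + b ^ 2 * x₁ ^ 2 * T0 := by
    have hpt : ∀ y : ℝ, landauOp b (⇑f) (x₁, y) * Ek k y
        = -(P₁ (P₁ f) (x₁, y) * Ek k y) - P₂ (P₂ f) (x₁, y) * Ek k y
          - (2 * Complex.I * b * x₁) * (P₂ f (x₁, y) * Ek k y)
          + (b ^ 2 * x₁ ^ 2) * (f (x₁, y) * Ek k y) := by
      intro y; rw [hL y]; ring
    simp_rw [hpt]
    rw [integral_add, integral_sub, integral_sub, integral_neg, integral_const_mul,
      integral_const_mul]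
    · exact hA.neg
    · exact hB
    · exact hA.neg.sub hB
    · exact hD.const_mul _
    · exact (hA.neg.sub hB).sub (hD.const_mul _)
    · exact hG.const_mul _
  -- the second-variable Fourier relations
  have hIb2 : T2 = (-Complex.I * k) * T0 := ibp f x₁ k
  have hIb22 : T22 = (-Complex.I * k) * T2 := ibp (P₂ f) x₁ k
  -- compute the x₁-derivatives of the partial Fourier transform
  set c : ℂ := (((Real.sqrt (2 * π))⁻¹ : ℝ) : ℂ) with hc
  have hPF : ∀ (g : SchwartzMap (ℝ × ℝ) ℂ) (t : ℝ),
      partialFourier (⇑g) (t, k) = c * ∫ y, g (t, y) * Ek k y := by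
    intro g t
    simp only [partialFourier, Ek, hc]
  have hd1 : deriv (fun t => partialFourier (⇑f) (t, k))
      = fun t => c * ∫ y, P₁ f (t, y) * Ek k y := by
    funext t
    have : (fun t => partialFourier (⇑f) (t, k))
        = fun t => c * ∫ y, f (t, y) * Ek k y := funext fun t => hPF f t
    rw [this]
    exact ((hasDerivAt_T f k t).const_mul c).deriv
  have hd2 : deriv (deriv (fun t => partialFourier (⇑f) (t, k))) x₁ = c * T11 := by
    rw [hd1]
    exact ((hasDerivAt_T (P₁ f) k x₁).const_mul c).deriv
  have hLHS : partialFourier (landauOp b ⇑f) (x₁, k)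
      = c * (-T11 - T22 - 2 * Complex.I * b * x₁ * T2 + b ^ 2 * x₁ ^ 2 * T0) := by
    rw [← hsplit]
    simp only [partialFourier, Ek, hc]
  rw [hLHS, hd2, hPF f x₁, hIb22, hIb2]
  linear_combination (2 * (b:ℂ) * x₁ * k - (k:ℂ) ^ 2) * c * T0 * Complex.I_sq
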